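/- Let M be a smooth n-manifold and let σ, ν : M → ℝ^{n+2} be an immersion of M into ℍ^{n+1} with unit normal ν having small principal curvatures. Let p, q ∈ M with p ≠ q, and suppose p and q are joined by a unit-speed geodesic of the first fundamental form of σ. Then there is no λ > 0 with σ(q) + ν(q) = λ·(σ(p) + ν(p)), and there is no λ > 0 with σ(q) − ν(q) = λ·(σ(p) − ν(p)); that is, the hyperbolic Gauss maps G⁺ = [σ + ν] and G⁻ = [σ − ν], with values in rays of the null cone, separate p and q. -/

import Mathlib

open scoped Manifold

/-- The Minkowski bilinear form on `ℝ^{n+2}`: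
`⟨x,y⟩ = x₁y₁ + ⋯ + x_{n+1}y_{n+1} − x_{n+2}y_{n+2}`. -/
noncomputable def mink (n : ℕ) (x y : Fin (n + 2) → ℝ) : ℝ :=
  (∑ i : Fin (n + 1), x i.castSucc * y i.castSucc) -
    x (Fin.last (n + 1)) * y (Fin.last (n + 1))

section MinkAux

variable {n : ℕ}

lemma mink_symm (x y : Fin (n + 2) → ℝ) : mink n x y = mink n y x := by
  simp only [mink, mul_comm]

lemma mink_add_left (x y z : Fin (n + 2) → ℝ) :
    mink n (x + y) z = mink n x z + mink n y z := by
  simp only [mink, Pi.add_apply, add_mul, Finset.sum_add_distrib]; ring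

lemma mink_smul_left (r : ℝ) (x z : Fin (n + 2) → ℝ) :
    mink n (r • x) z = r * mink n x z := by
  simp only [mink, Pi.smul_apply, smul_eq_mul, mul_assoc, ← Finset.mul_sum, mul_sub]

lemma mink_add_right (x y z : Fin (n + 2) → ℝ) :
    mink n x (y + z) = mink n x y + mink n x z := by
  rw [mink_symm, mink_add_left, mink_symm y x, mink_symm z x]

lemma mink_smul_right (r : ℝ) (x z : Fin (n + 2) → ℝ) :
    mink n x (r • z) = r * mink n x z := by
  rw [mink_symm, mink_smul_left, mink_symm]

lemma mink_sub_left (x y z : Fin (n + 2) → ℝ) :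
    mink n (x - y) z = mink n x z - mink n y z := by
  simp only [mink, Pi.sub_apply, sub_mul, Finset.sum_sub_distrib]; ring

lemma mink_sub_right (x y z : Fin (n + 2) → ℝ) :
    mink n x (y - z) = mink n x y - mink n x z := by
  rw [mink_symm, mink_sub_left, mink_symm y x, mink_symm z x]

lemma mink_zero_right (x : Fin (n + 2) → ℝ) : mink n x 0 = 0 := by
  simp [mink]

lemma mink_zero_left (x : Fin (n + 2) → ℝ) : mink n 0 x = 0 := by
  simp [mink]

/-- Product rule for `mink` along curves. -/
lemma hasDerivWithinAt_mink {f g : ℝ → Fin (n + 2) → ℝ} {f' g' : Fin (n + 2) → ℝ}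
    {s : Set ℝ} {t : ℝ}
    (hf : HasDerivWithinAt f f' s t) (hg : HasDerivWithinAt g g' s t) :
    HasDerivWithinAt (fun u => mink n (f u) (g u))
      (mink n f' (g t) + mink n (f t) g') s t := by
  have hcoordf : ∀ i, HasDerivWithinAt (fun u => f u i) (f' i) s t := fun i =>
    ((ContinuousLinearMap.proj (R := ℝ) (φ := fun _ : Fin (n+2) => ℝ) i).hasFDerivAt).comp_hasDerivWithinAt t hf
  have hcoordg : ∀ i, HasDerivWithinAt (fun u => g u i) (g' i) s t := fun i =>
    ((ContinuousLinearMap.proj (R := ℝ) (φ := fun _ : Fin (n+2) => ℝ) i).hasFDerivAt).comp_hasDerivWithinAt t hg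
  have hsum : HasDerivWithinAt
      (fun u => ∑ i : Fin (n + 1), f u i.castSucc * g u i.castSucc)
      (∑ i : Fin (n + 1), (f' i.castSucc * g t i.castSucc + f t i.castSucc * g' i.castSucc)) s t :=
    HasDerivWithinAt.fun_sum fun (i : Fin (n + 1)) _ => (hcoordf i.castSucc).mul (hcoordg i.castSucc)
  have hlast : HasDerivWithinAt
      (fun u => f u (Fin.last (n+1)) * g u (Fin.last (n+1)))
      (f' (Fin.last (n+1)) * g t (Fin.last (n+1)) + f t (Fin.last (n+1)) * g' (Fin.last (n+1))) s t :=
    (hcoordf _).mul (hcoordg _)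
  have := hsum.fun_sub hlast
  convert this using 1
  · rfl
  · rfl
  · rfl
  simp only [mink, Finset.sum_add_distrib]; ring

/-- Discriminant Cauchy--Schwarz. -/
lemma sq_le_of_quadratic_nonneg {A B C : ℝ} (hC : 0 ≤ C)
    (h : ∀ s : ℝ, 0 ≤ A + 2 * B * s + C * s ^ 2) : B ^ 2 ≤ A * C := by
  rcases eq_or_lt_of_le hC with hC0 | hCpos
  · have hB : B = 0 := by
      by_contra hB
      have h1 := h (-(A + 1) / (2 * B))
      rw [← hC0] at h1
      have h2B : (2 * B) ≠ 0 := by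
        simpa using hB
      have : A + 2 * B * (-(A + 1) / (2 * B)) + 0 * (-(A + 1) / (2 * B)) ^ 2 = -1 := by
        field_simp
        ring
      rw [this] at h1; linarith
    have hA : 0 ≤ A := by simpa using h 0
    simp [hB, ← hC0]
  · have h1 := h (-B / C)
    have hC' : C ≠ 0 := ne_of_gt hCpos
    have h2 : A + 2 * B * (-B / C) + C * (-B / C) ^ 2 = A - B ^ 2 / C := by
      field_simp; ring
    rw [h2] at h1
    have := (div_le_iff₀ hCpos).mp (by linarith : B ^ 2 / C ≤ A)
    linarith

/-- The orthogonal complement of a timelike vector is spacelike. -/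
lemma mink_nonneg_of_ortho {x z : Fin (n + 2) → ℝ} (hx : mink n x x < 0)
    (hxz : mink n x z = 0) : 0 ≤ mink n z z := by
  have hcs := Finset.sum_mul_sq_le_sq_mul_sq Finset.univ
    (fun i : Fin (n+1) => x i.castSucc) (fun i : Fin (n+1) => z i.castSucc)
  simp only [mink] at hx hxz ⊢
  set A := ∑ i : Fin (n+1), x i.castSucc * x i.castSucc with hA
  set B := ∑ i : Fin (n+1), x i.castSucc * z i.castSucc with hB
  set C := ∑ i : Fin (n+1), z i.castSucc * z i.castSucc with hC
  have hA2 : ∑ i : Fin (n+1), x i.castSucc ^ 2 = A := by rw [hA]; simp [sq]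
  have hC2 : ∑ i : Fin (n+1), z i.castSucc ^ 2 = C := by rw [hC]; simp [sq]
  rw [hA2, hC2] at hcs
  have hCpos : 0 ≤ C := Finset.sum_nonneg fun i _ => mul_self_nonneg _
  set xl := x (Fin.last (n + 1))
  set zl := z (Fin.last (n + 1))
  have hxl : A < xl * xl := by linarith
  have hb : B = xl * zl := by linarith
  have hA0 : 0 ≤ A := Finset.sum_nonneg fun i _ => mul_self_nonneg _
  have hxlpos : 0 < xl * xl := lt_of_le_of_lt hA0 hxl
  rw [hb] at hcs
  nlinarith [mul_le_mul_of_nonneg_left hxl.le hCpos, hcs, hxlpos]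

lemma mink_pos_of_ortho {x z : Fin (n + 2) → ℝ} (hx : mink n x x < 0)
    (hxz : mink n x z = 0) (hz : z ≠ 0) : 0 < mink n z z := by
  rcases (mink_nonneg_of_ortho hx hxz).lt_or_eq with h | h
  · exact h
  exfalso
  apply hz
  have hcs := Finset.sum_mul_sq_le_sq_mul_sq Finset.univ
    (fun i : Fin (n+1) => x i.castSucc) (fun i : Fin (n+1) => z i.castSucc)
  simp only [mink] at hx hxz h
  set A := ∑ i : Fin (n+1), x i.castSucc * x i.castSucc with hA
  set B := ∑ i : Fin (n+1), x i.castSucc * z i.castSucc with hB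
  set C := ∑ i : Fin (n+1), z i.castSucc * z i.castSucc with hC
  have hA2 : ∑ i : Fin (n+1), x i.castSucc ^ 2 = A := by rw [hA]; simp [sq]
  have hC2 : ∑ i : Fin (n+1), z i.castSucc ^ 2 = C := by rw [hC]; simp [sq]
  rw [hA2, hC2] at hcs
  have hCpos : 0 ≤ C := Finset.sum_nonneg fun i _ => mul_self_nonneg _
  set xl := x (Fin.last (n + 1)) with hxldef
  set zl := z (Fin.last (n + 1)) with hzldef
  have hxl : A < xl * xl := by linarith
  have hb : B = xl * zl := by linarith
  have hC0 : C = 0 := by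
    by_contra hC0
    have hCpos' : 0 < C := lt_of_le_of_ne hCpos (Ne.symm hC0)
    have hCeq : C = zl * zl := by linarith
    have key : (xl * zl) ^ 2 = xl * xl * C := by rw [hCeq]; ring
    rw [hb, key] at hcs
    nlinarith [mul_lt_mul_of_pos_left hxl hCpos', hcs]
  have hzero : ∀ i : Fin (n+1), z i.castSucc = 0 := by
    intro i
    have := (Finset.sum_eq_zero_iff_of_nonneg
      (fun j _ => mul_self_nonneg (z (Fin.castSucc j)))).mp (hC.symm ▸ hC0) i (Finset.mem_univ i)
    exact mul_self_eq_zero.mp this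
  have hBzero : B = 0 := by
    rw [hB]; exact Finset.sum_eq_zero fun i _ => by rw [hzero i, mul_zero]
  have hxl0 : xl ≠ 0 := by
    intro h0; rw [h0] at hxl
    have : 0 ≤ A := Finset.sum_nonneg fun i _ => mul_self_nonneg _
    nlinarith
  have hzl0 : zl = 0 := by
    have : xl * zl = 0 := by rw [← hb, hBzero]
    rcases mul_eq_zero.mp this with h' | h'
    · exact absurd h' hxl0
    · exact h'
  funext i
  simp only [Pi.zero_apply]
  cases i using Fin.lastCases with
  | last => exact hzl0
  | cast j => exact hzero j

/-- A function on `[a,b]` whose derivative has a positive derivative cannot vanish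
at both endpoints. -/
lemma no_double_zero_of_pos_second_deriv {a b : ℝ} (hab : a < b) (u' u'' : ℝ → ℝ)
    (hu' : ∀ t ∈ Set.Icc a b, HasDerivWithinAt u' (u'' t) (Set.Icc a b) t)
    (hpos : ∀ t ∈ Set.Icc a b, 0 < u'' t)
    (ha : u' a = 0) (hb : u' b = 0) : False := by
  have hcont : ContinuousOn u' (Set.Icc a b) := fun t ht => (hu' t ht).continuousWithinAt
  have hmono : StrictMonoOn u' (Set.Icc a b) := by
    apply strictMonoOn_of_deriv_pos (convex_Icc a b) hcont
    intro t ht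
    rw [interior_Icc] at ht
    have h1 : HasDerivAt u' (u'' t) t :=
      (hu' t (Set.mem_Icc_of_Ioo ht)).hasDerivAt (Icc_mem_nhds ht.1 ht.2)
    rw [h1.deriv]
    exact hpos t (Set.mem_Icc_of_Ioo ht)
  have := hmono (Set.left_mem_Icc.mpr hab.le) (Set.right_mem_Icc.mpr hab.le) hab
  rw [ha, hb] at this; exact lt_irrefl 0 this

end MinkAux

/-- If `σ : M → ℍ^{n+1}` is an immersion with unit normal `ν` having small principal
curvatures, and `p ≠ q` are joined by a unit-speed geodesic of the first fundamental
form of `σ`, then the hyperbolic Gauss maps `G⁺ = [σ + ν]` and `G⁻ = [σ − ν]`, with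
values in rays of the null cone, separate `p` and `q`. -/
theorem gauss_maps_separate_points
    {n : ℕ} {M : Type*} [TopologicalSpace M]
    [ChartedSpace (EuclideanSpace ℝ (Fin n)) M]
    [IsManifold (𝓡 n) (⊤ : ℕ∞) M]
    (σ ν : M → Fin (n + 2) → ℝ)
    (hσ : ContMDiff (𝓡 n) 𝓘(ℝ, Fin (n + 2) → ℝ) (⊤ : ℕ∞) σ)
    (hν : ContMDiff (𝓡 n) 𝓘(ℝ, Fin (n + 2) → ℝ) (⊤ : ℕ∞) ν)
    (hσσ : ∀ p, mink n (σ p) (σ p) = -1)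
    (hpos : ∀ p, 0 < σ p (Fin.last (n + 1)))
    (hνν : ∀ p, mink n (ν p) (ν p) = 1)
    (hσν : ∀ p, mink n (σ p) (ν p) = 0)
    (himm : ∀ p, Function.Injective (mfderiv (𝓡 n) 𝓘(ℝ, Fin (n + 2) → ℝ) σ p))
    (hnormal : ∀ p (v : EuclideanSpace ℝ (Fin n)),
      mink n (mfderiv (𝓡 n) 𝓘(ℝ, Fin (n + 2) → ℝ) σ p v) (ν p) = 0)
    (hsmall : ∀ p (v : EuclideanSpace ℝ (Fin n)), v ≠ 0 →
      mink n (mfderiv (𝓡 n) 𝓘(ℝ, Fin (n + 2) → ℝ) ν p v)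
          (mfderiv (𝓡 n) 𝓘(ℝ, Fin (n + 2) → ℝ) ν p v) <
        mink n (mfderiv (𝓡 n) 𝓘(ℝ, Fin (n + 2) → ℝ) σ p v)
          (mfderiv (𝓡 n) 𝓘(ℝ, Fin (n + 2) → ℝ) σ p v))
    (p q : M) (hpq : p ≠ q)
    (a b : ℝ) (hab : a < b) (c : ℝ → M)
    (hc : ContMDiff 𝓘(ℝ, ℝ) (𝓡 n) (⊤ : ℕ∞) c)
    (hca : c a = p) (hcb : c b = q)
    (γ' γ'' : ℝ → Fin (n + 2) → ℝ)
    (hd1 : ∀ t ∈ Set.Icc a b,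
      HasDerivWithinAt (fun s => σ (c s)) (γ' t) (Set.Icc a b) t)
    (hd2 : ∀ t ∈ Set.Icc a b, HasDerivWithinAt γ' (γ'' t) (Set.Icc a b) t)
    (hspeed : ∀ t ∈ Set.Icc a b, mink n (γ' t) (γ' t) = 1)
    (hgeo : ∀ t ∈ Set.Icc a b, ∃ k : ℝ, γ'' t - σ (c t) = k • ν (c t)) :
    (¬ ∃ l : ℝ, 0 < l ∧ σ q + ν q = l • (σ p + ν p)) ∧
    (¬ ∃ l : ℝ, 0 < l ∧ σ q - ν q = l • (σ p - ν p)) := by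
  have hIcc : UniqueDiffOn ℝ (Set.Icc a b) := uniqueDiffOn_Icc hab
  -- the velocity of `c`
  set v : ∀ t : ℝ, EuclideanSpace ℝ (Fin n) :=
    fun t => mfderiv 𝓘(ℝ, ℝ) (𝓡 n) c t (1 : ℝ) with hv
  -- chain rule
  have chain : ∀ (f : M → Fin (n + 2) → ℝ),
      ContMDiff (𝓡 n) 𝓘(ℝ, Fin (n + 2) → ℝ) (⊤ : ℕ∞) f → ∀ t : ℝ,
      HasDerivAt (fun s => f (c s))
        (mfderiv (𝓡 n) 𝓘(ℝ, Fin (n + 2) → ℝ) f (c t) (v t)) t := by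
    intro f hf t
    have hcomp : ContMDiff 𝓘(ℝ, ℝ) 𝓘(ℝ, Fin (n + 2) → ℝ) (⊤ : ℕ∞) (f ∘ c) := hf.comp hc
    have hcd := contMDiff_iff_contDiff.mp hcomp
    have hdiff : DifferentiableAt ℝ (f ∘ c) t := (hcd.differentiable (by simp)) t
    have h1 : HasDerivAt (f ∘ c) (deriv (f ∘ c) t) t := hdiff.hasDerivAt
    have h3 : mfderiv 𝓘(ℝ, ℝ) 𝓘(ℝ, Fin (n + 2) → ℝ) (f ∘ c) t = fderiv ℝ (f ∘ c) t :=
      mfderiv_eq_fderiv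
    have h4 := mfderiv_comp t (hf.mdifferentiable (by simp) (c t))
      (hc.mdifferentiable (by simp) t)
    have h5 : deriv (f ∘ c) t
        = mfderiv (𝓡 n) 𝓘(ℝ, Fin (n + 2) → ℝ) f (c t) (v t) := by
      have : deriv (f ∘ c) t = fderiv ℝ (f ∘ c) t 1 := rfl
      rw [this, ← h3, h4]
      rfl
    rw [h5] at h1
    exact h1
  have hσc : ∀ t : ℝ, HasDerivAt (fun s => σ (c s))
      (mfderiv (𝓡 n) 𝓘(ℝ, Fin (n + 2) → ℝ) σ (c t) (v t)) t := chain σ hσ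
  set η' : ℝ → Fin (n + 2) → ℝ :=
    fun t => mfderiv (𝓡 n) 𝓘(ℝ, Fin (n + 2) → ℝ) ν (c t) (v t) with hη'
  have hνc : ∀ t : ℝ, HasDerivAt (fun s => ν (c s)) (η' t) t := chain ν hν
  -- identification of γ' with the mfderiv expression on [a,b]
  have hγ'eq : ∀ t ∈ Set.Icc a b,
      γ' t = mfderiv (𝓡 n) 𝓘(ℝ, Fin (n + 2) → ℝ) σ (c t) (v t) := by
    intro t ht
    have e1 := (hd1 t ht).derivWithin (hIcc t ht)
    have e2 := ((hσc t).hasDerivWithinAt (s := Set.Icc a b)).derivWithin (hIcc t ht)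
    rw [← e1, ← e2]
  -- γ' is mink-orthogonal to ν along the curve
  have hγ'ν : ∀ t ∈ Set.Icc a b, mink n (γ' t) (ν (c t)) = 0 := by
    intro t ht
    rw [hγ'eq t ht]
    exact hnormal (c t) (v t)
  -- γ' is mink-orthogonal to σ along the curve
  have hγ'σ : ∀ t ∈ Set.Icc a b, mink n (γ' t) (σ (c t)) = 0 := by
    intro t ht
    have hD : HasDerivWithinAt (fun s => mink n (σ (c s)) (σ (c s)))
        (mink n (γ' t) (σ (c t)) + mink n (σ (c t)) (γ' t)) (Set.Icc a b) t :=
      hasDerivWithinAt_mink (hd1 t ht) (hd1 t ht)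
    have hC : HasDerivWithinAt (fun s => mink n (σ (c s)) (σ (c s)))
        (0 : ℝ) (Set.Icc a b) t := by
      have : (fun s => mink n (σ (c s)) (σ (c s))) = fun _ => (-1 : ℝ) :=
        funext fun s => hσσ (c s)
      rw [this]
      exact hasDerivWithinAt_const t _ _
    have := (hD.derivWithin (hIcc t ht)).symm.trans (hC.derivWithin (hIcc t ht))
    rw [mink_symm (σ (c t)) (γ' t)] at this
    linarith
  -- σ is mink-orthogonal to η' along the curve
  have hση' : ∀ t ∈ Set.Icc a b, mink n (σ (c t)) (η' t) = 0 := by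
    intro t ht
    have hD : HasDerivWithinAt (fun s => mink n (σ (c s)) (ν (c s)))
        (mink n (γ' t) (ν (c t)) + mink n (σ (c t)) (η' t)) (Set.Icc a b) t :=
      hasDerivWithinAt_mink (hd1 t ht) ((hνc t).hasDerivWithinAt)
    have hC : HasDerivWithinAt (fun s => mink n (σ (c s)) (ν (c s)))
        (0 : ℝ) (Set.Icc a b) t := by
      have : (fun s => mink n (σ (c s)) (ν (c s))) = fun _ => (0 : ℝ) :=
        funext fun s => hσν (c s)
      rw [this]
      exact hasDerivWithinAt_const t _ _
    have := (hD.derivWithin (hIcc t ht)).symm.trans (hC.derivWithin (hIcc t ht))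
    rw [hγ'ν t ht] at this
    linarith
  -- the geodesic curvature scalar, with modulus < 1
  have hk : ∀ t ∈ Set.Icc a b, ∃ k : ℝ,
      γ'' t = σ (c t) + k • ν (c t) ∧ |k| < 1 := by
    intro t ht
    obtain ⟨k, hkeq⟩ := hgeo t ht
    refine ⟨k, by rw [← hkeq]; abel, ?_⟩
    -- v t ≠ 0
    have hvne : v t ≠ 0 := by
      intro h0
      have : γ' t = 0 := by
        rw [hγ'eq t ht, h0]; exact map_zero _
      have h1 := hspeed t ht
      rw [this, mink_zero_left] at h1
      norm_num at h1
    -- k = - mink (γ' t) (η' t)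
    have hD : HasDerivWithinAt (fun s => mink n (γ' s) (ν (c s)))
        (mink n (γ'' t) (ν (c t)) + mink n (γ' t) (η' t)) (Set.Icc a b) t :=
      hasDerivWithinAt_mink (hd2 t ht) ((hνc t).hasDerivWithinAt)
    have hC : HasDerivWithinAt (fun s => mink n (γ' s) (ν (c s)))
        (0 : ℝ) (Set.Icc a b) t := by
      refine (hasDerivWithinAt_const t _ (0 : ℝ)).congr (fun s hs => hγ'ν s hs) (hγ'ν t ht)
    have hsum0 : mink n (γ'' t) (ν (c t)) + mink n (γ' t) (η' t) = 0 :=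
      (hD.derivWithin (hIcc t ht)).symm.trans (hC.derivWithin (hIcc t ht))
    have hkeq2 : γ'' t = σ (c t) + k • ν (c t) := by rw [← hkeq]; abel
    have hγ''ν : mink n (γ'' t) (ν (c t)) = k := by
      rw [hkeq2, mink_add_left, mink_smul_left, hσν (c t), hνν (c t)]; ring
    have hkval : k = -(mink n (γ' t) (η' t)) := by
      rw [← hγ''ν]; linarith [hsum0]
    have htime : mink n (σ (c t)) (σ (c t)) < 0 := by rw [hσσ (c t)]; norm_num
    have hCpos : 0 ≤ mink n (η' t) (η' t) :=
      mink_nonneg_of_ortho htime (hση' t ht)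
    have hClt : mink n (η' t) (η' t) < 1 := by
      have h1 := hsmall (c t) (v t) hvne
      rw [← hγ'eq t ht] at h1
      rw [hspeed t ht] at h1
      exact h1
    have hquad : ∀ s : ℝ, 0 ≤ 1 + 2 * mink n (γ' t) (η' t) * s
        + mink n (η' t) (η' t) * s ^ 2 := by
      intro s
      have horto : mink n (σ (c t)) (γ' t + s • η' t) = 0 := by
        rw [mink_add_right, mink_smul_right, mink_symm (σ (c t)) (γ' t),
          hγ'σ t ht, hση' t ht]
        ring
      have hnn := mink_nonneg_of_ortho htime horto
      have hexp : mink n (γ' t + s • η' t) (γ' t + s • η' t)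
          = 1 + 2 * mink n (γ' t) (η' t) * s + mink n (η' t) (η' t) * s ^ 2 := by
        simp only [mink_add_left, mink_add_right, mink_smul_left, mink_smul_right]
        rw [hspeed t ht, mink_symm (η' t) (γ' t)]
        ring
      rw [hexp] at hnn
      exact hnn
    have hB2 := sq_le_of_quadratic_nonneg hCpos hquad
    have hk2 : k ^ 2 < 1 := by
      rw [hkval]
      calc (-(mink n (γ' t) (η' t))) ^ 2 = mink n (γ' t) (η' t) ^ 2 := by ring
      _ ≤ 1 * mink n (η' t) (η' t) := hB2
      _ < 1 := by rw [one_mul]; exact hClt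
    exact abs_lt.mpr ⟨by nlinarith, by nlinarith⟩
  -- continuity of the support-type function
  have haI : a ∈ Set.Icc a b := Set.left_mem_Icc.mpr hab.le
  have hbI : b ∈ Set.Icc a b := Set.right_mem_Icc.mpr hab.le
  -- the main argument, for a general null vector N
  have main : ∀ N : Fin (n + 2) → ℝ, mink n N N = 0 → mink n (σ p) N < 0 →
      mink n (γ' a) N = 0 → mink n (γ' b) N = 0 → False := by
    intro N hNN hσpN h'a h'b
    -- derivatives of t ↦ -⟨σ(c t), N⟩
    have hDmink : ∀ t ∈ Set.Icc a b,
        HasDerivWithinAt (fun s => mink n (σ (c s)) N) (mink n (γ' t) N)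
          (Set.Icc a b) t := by
      intro t ht
      have := hasDerivWithinAt_mink (hd1 t ht) (hasDerivWithinAt_const t (Set.Icc a b) N)
      simpa [mink_zero_right] using this
    have hD2mink : ∀ t ∈ Set.Icc a b,
        HasDerivWithinAt (fun s => -(mink n (γ' s) N)) (-(mink n (γ'' t) N))
          (Set.Icc a b) t := by
      intro t ht
      have := (hasDerivWithinAt_mink (hd2 t ht) (hasDerivWithinAt_const t (Set.Icc a b) N)).fun_neg
      simpa [mink_zero_right] using this
    -- ⟨σ(c t), N⟩ is negative on [a,b]
    have hNne : N ≠ 0 := by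
      intro h0
      rw [h0, mink_zero_right] at hσpN
      exact lt_irrefl 0 hσpN
    have hne : ∀ t ∈ Set.Icc a b, mink n (σ (c t)) N ≠ 0 := by
      intro t ht h0
      have htime : mink n (σ (c t)) (σ (c t)) < 0 := by rw [hσσ (c t)]; norm_num
      have := mink_pos_of_ortho htime h0 hNne
      rw [hNN] at this
      exact lt_irrefl 0 this
    have hua : mink n (σ (c a)) N < 0 := by rw [hca]; exact hσpN
    have hult : ∀ t ∈ Set.Icc a b, mink n (σ (c t)) N < 0 := by
      intro t ht
      rcases lt_or_ge (mink n (σ (c t)) N) 0 with h | h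
      · exact h
      exfalso
      have hpos' : 0 < mink n (σ (c t)) N := lt_of_le_of_ne h (Ne.symm (hne t ht))
      have hsub : Set.Icc a t ⊆ Set.Icc a b := Set.Icc_subset_Icc le_rfl ht.2
      have hcont : ContinuousOn (fun s => mink n (σ (c s)) N) (Set.Icc a t) :=
        fun s hs => ((hDmink s (hsub hs)).continuousWithinAt).mono hsub
      have hiv := intermediate_value_Icc ht.1 hcont
      have h0mem : (0 : ℝ) ∈ Set.Icc (mink n (σ (c a)) N) (mink n (σ (c t)) N) :=
        ⟨hua.le, hpos'.le⟩
      obtain ⟨s, hs, hfs⟩ := hiv h0mem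
      exact hne s (hsub hs) hfs
    -- positivity of the second derivative
    have hpos'' : ∀ t ∈ Set.Icc a b, 0 < -(mink n (γ'' t) N) := by
      intro t ht
      obtain ⟨k, hkeq2, hklt⟩ := hk t ht
      have hutpos : 0 < -(mink n (σ (c t)) N) := by linarith [hult t ht]
      set ut : ℝ := -(mink n (σ (c t)) N) with hut
      set m : ℝ := mink n (ν (c t)) N with hm
      -- ⟨γ'', N⟩ = ⟨σ, N⟩ + k m
      have hγ''N : mink n (γ'' t) N = -ut + k * m := by
        rw [hkeq2, mink_add_left, mink_smul_left, ← hm, hut]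
        ring
      -- |m| ≤ ut
      have hσN : mink n (σ (c t)) N = -ut := by rw [hut]; ring
      have hNσ : mink n N (σ (c t)) = -ut := by rw [mink_symm, hσN]
      have hNν : mink n N (ν (c t)) = m := by rw [mink_symm, hm]
      have hνσ : mink n (ν (c t)) (σ (c t)) = 0 := by rw [mink_symm]; exact hσν (c t)
      have hσW : mink n (σ (c t)) (N - ut • σ (c t) - m • ν (c t)) = 0 := by
        rw [mink_sub_right, mink_sub_right, mink_smul_right, mink_smul_right,
          hσN, hσσ (c t), hσν (c t)]
        ring
      have htime : mink n (σ (c t)) (σ (c t)) < 0 := by rw [hσσ (c t)]; norm_num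
      have hWW := mink_nonneg_of_ortho htime hσW
      have hexp : mink n (N - ut • σ (c t) - m • ν (c t)) (N - ut • σ (c t) - m • ν (c t))
          = ut * ut - m * m := by
        simp only [mink_sub_left, mink_sub_right, mink_smul_left, mink_smul_right]
        rw [hNN, hNσ, hNν, hσN, hσσ (c t), hσν (c t), hm, hνσ, hνν (c t)]
        ring
      rw [hexp] at hWW
      have habs : |m| ≤ ut := by
        rw [abs_le]
        constructor <;> nlinarith
      have hstep : k * m < ut := by
        calc k * m ≤ |k * m| := le_abs_self _
        _ = |k| * |m| := abs_mul k m
        _ ≤ |k| * ut := mul_le_mul_of_nonneg_left habs (abs_nonneg k)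
        _ < 1 * ut := mul_lt_mul_of_pos_right hklt hutpos
        _ = ut := one_mul ut
      rw [hγ''N]
      linarith
    -- derivative vanishes at both endpoints: contradiction
    exact no_double_zero_of_pos_second_deriv hab
      (fun t => -(mink n (γ' t) N)) (fun t => -(mink n (γ'' t) N))
      hD2mink hpos''
      (by simp [h'a]) (by simp [h'b])
  constructor
  · rintro ⟨l, hl, heq⟩
    have hνσp : mink n (ν p) (σ p) = 0 := by rw [mink_symm]; exact hσν p
    refine main (σ p + ν p) ?_ ?_ ?_ ?_
    · simp only [mink_add_left, mink_add_right]
      rw [hσσ p, hνν p, hσν p, hνσp]; ring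
    · rw [mink_add_right, hσσ p, hσν p]; norm_num
    · rw [mink_add_right, ← hca, hγ'σ a haI, hγ'ν a haI]; ring
    · have h1 : mink n (γ' b) (σ q + ν q) = 0 := by
        rw [mink_add_right, ← hcb, hγ'σ b hbI, hγ'ν b hbI]; ring
      rw [heq, mink_smul_right] at h1
      rcases mul_eq_zero.mp h1 with h | h
      · exact absurd h (ne_of_gt hl)
      · exact h
  · rintro ⟨l, hl, heq⟩
    have hνσp : mink n (ν p) (σ p) = 0 := by rw [mink_symm]; exact hσν p
    refine main (σ p - ν p) ?_ ?_ ?_ ?_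
    · simp only [mink_sub_left, mink_sub_right]
      rw [hσσ p, hνν p, hσν p, hνσp]; ring
    · rw [mink_sub_right, hσσ p, hσν p]; norm_num
    · rw [mink_sub_right, ← hca, hγ'σ a haI, hγ'ν a haI]; ring
    · have h1 : mink n (γ' b) (σ q - ν q) = 0 := by
        rw [mink_sub_right, ← hcb, hγ'σ b hbI, hγ'ν b hbI]; ring
      rw [heq, mink_smul_right] at h1
      rcases mul_eq_zero.mp h1 with h | h
      · exact absurd h (ne_of_gt hl)
      · exact h
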